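/- Consider on ℝ^d the mixed anchor ρ^i{}_J = (δ^i{}_j, β^{ij}) with β : ℝ^d → Mat_d(ℝ) differentiable, and a differentiable totally antisymmetric twist T_{IJK} with components (H_{ijk}, f_{ij}{}^k, Q_i{}^{jk}, R^{ijk}). Then: (i) condition (ca1) holds if and only if β^{(ij)} = 0, i.e. β is an antisymmetric bivector; and (ii) assuming β antisymmetric, condition (ca2) holds if and only if the three relations hold for all indices: f_{ij}{}^k + β^{kl} H_{lij} = 0; ∂_k β^{ij} − Q_k{}^{ji} + β^{jl} f_{lk}{}^i = 0; and β^{li} ∂_l β^{jk} − β^{lk} ∂_l β^{ji} − R^{jik} − β^{jl} Q_l{}^{ik} = 0. -/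
import Mathlib


open scoped BigOperators

noncomputable section

/-- Doubled index set: `I = 1,…,2d` realized as `Fin d ⊕ Fin d`;
`Sum.inl i` is the lower (vector) label `i`, `Sum.inr i` the upper (form) label `^i`. -/
abbrev DIdx (d : ℕ) := Fin d ⊕ Fin d

/-- The base space `ℝ^d`. -/
abbrev BSpace (d : ℕ) := Fin d → ℝ

/-- The constant split-signature metric `η = ((0,1_d),(1_d,0))`. -/
def eta {d : ℕ} : DIdx d → DIdx d → ℝ
  | Sum.inl i, Sum.inr j => if i = j then 1 else 0
  | Sum.inr i, Sum.inl j => if i = j then 1 else 0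
  | _, _ => 0

/-- Partial derivative `∂_i f (x)` on the base `ℝ^d`. -/
def pdb {d : ℕ} (f : BSpace d → ℝ) (i : Fin d) (x : BSpace d) : ℝ :=
  fderiv ℝ f x (Pi.single i 1)

/-- Weight-one antisymmetrization over three indices. -/
def asym3 {α : Type*} (G : α → α → α → ℝ) (a b c : α) : ℝ :=
  (1/6) * (G a b c - G a c b + G b c a - G b a c + G c a b - G c b a)

/-- Weight-one antisymmetrization over four indices. -/
def asym4 {α : Type*} (G : α → α → α → α → ℝ) (a b c e : α) : ℝ :=
  (1/24) * ∑ σ : Equiv.Perm (Fin 4),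
    ((Equiv.Perm.sign σ : ℤ) : ℝ) *
      G (![a,b,c,e] (σ 0)) (![a,b,c,e] (σ 1)) (![a,b,c,e] (σ 2)) (![a,b,c,e] (σ 3))

/-- Local Courant algebroid condition (ca1): `η^{IJ} ρ^i{}_I ρ^j{}_J = 0`. -/
def ca1 {d : ℕ} (r : BSpace d → Fin d → DIdx d → ℝ) : Prop :=
  ∀ (x : BSpace d) (i j : Fin d), ∑ I, ∑ J, eta I J * r x i I * r x j J = 0

/-- Local Courant algebroid condition (ca2):
`ρ^i{}_I ∂_i ρ^j{}_J − ρ^i{}_J ∂_i ρ^j{}_I = η^{KL} ρ^j{}_K T_{LIJ}`. -/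
def ca2 {d : ℕ} (r : BSpace d → Fin d → DIdx d → ℝ)
    (T : BSpace d → DIdx d → DIdx d → DIdx d → ℝ) : Prop :=
  ∀ (x : BSpace d) (j : Fin d) (I J : DIdx d),
    ∑ i, (r x i I * pdb (fun y => r y j J) i x - r x i J * pdb (fun y => r y j I) i x)
      = ∑ K, ∑ L, eta K L * r x j K * T x L I J

/-- Local Courant algebroid condition (ca3):
`4 ρ^i{}_{[L} ∂_i T_{IJK]} + 3 η^{MN} T_{M[IJ} T_{KL]N} = 0`. -/
def ca3 {d : ℕ} (r : BSpace d → Fin d → DIdx d → ℝ)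
    (T : BSpace d → DIdx d → DIdx d → DIdx d → ℝ) : Prop :=
  ∀ (x : BSpace d) (I J K L : DIdx d),
    4 * asym4 (fun a b c e => ∑ i, r x i a * pdb (fun y => T y b c e) i x) L I J K
      + 3 * asym4 (fun a b c e => ∑ M, ∑ N, eta M N * T x M a b * T x c e N) I J K L
      = 0

/-- The mixed anchor `ρ^i{}_J = (δ^i{}_j, β^{ij})`. -/
def rMix {d : ℕ} (β : BSpace d → Fin d → Fin d → ℝ) : BSpace d → Fin d → DIdx d → ℝ :=
  fun x i => Sum.elim (fun j => if i = j then (1:ℝ) else 0) (fun j => β x i j)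

section Aux

variable {d : ℕ} (β : BSpace d → Fin d → Fin d → ℝ) (T : BSpace d → DIdx d → DIdx d → DIdx d → ℝ)

lemma rhsimp (x : BSpace d) (j : Fin d) (I J : DIdx d) :
    ∑ K, ∑ L, eta K L * rMix β x j K * T x L I J
      = T x (Sum.inr j) I J + ∑ k, β x j k * T x (Sum.inl k) I J := by
  simp [Fintype.sum_sum_type, eta, rMix, mul_ite, ite_mul, Finset.sum_ite_eq, Finset.sum_ite_eq']

lemma pdb_const (c : ℝ) (i : Fin d) (x : BSpace d) :
    pdb (fun _ => c) i x = 0 := by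
  simp [pdb]

lemma pdb_inl (j b i : Fin d) (x : BSpace d) :
    pdb (fun y => rMix β y j (Sum.inl b)) i x = 0 := by
  show pdb (fun _ => if j = b then (1:ℝ) else 0) i x = 0
  simp [pdb]

lemma lhs_ll (x : BSpace d) (j a b : Fin d) :
    ∑ i, (rMix β x i (Sum.inl a) * pdb (fun y => rMix β y j (Sum.inl b)) i x
      - rMix β x i (Sum.inl b) * pdb (fun y => rMix β y j (Sum.inl a)) i x) = 0 := by
  simp [pdb_inl]

lemma lhs_lr (x : BSpace d) (j a b : Fin d) :
    ∑ i, (rMix β x i (Sum.inl a) * pdb (fun y => rMix β y j (Sum.inr b)) i x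
      - rMix β x i (Sum.inr b) * pdb (fun y => rMix β y j (Sum.inl a)) i x)
      = pdb (fun y => β y j b) a x := by
  simp [pdb_inl, rMix, pdb_const]

lemma lhs_rr (x : BSpace d) (j a b : Fin d) :
    ∑ i, (rMix β x i (Sum.inr a) * pdb (fun y => rMix β y j (Sum.inr b)) i x
      - rMix β x i (Sum.inr b) * pdb (fun y => rMix β y j (Sum.inr a)) i x)
      = ∑ i, (β x i a * pdb (fun y => β y j b) i x - β x i b * pdb (fun y => β y j a) i x) := by
  rfl

lemma swapsum (hT1 : ∀ (x : BSpace d) (I J K : DIdx d), T x I J K = -T x J I K)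
    (c1 : ∀ (x : BSpace d) (i j k : Fin d),
      T x (Sum.inl i) (Sum.inl j) (Sum.inr k)
        + ∑ l, β x k l * T x (Sum.inl l) (Sum.inl i) (Sum.inl j) = 0)
    (x : BSpace d) (k i j : Fin d) :
    (∑ l, β x i l * T x (Sum.inl l) (Sum.inl k) (Sum.inr j))
      + ∑ l, β x j l * T x (Sum.inl l) (Sum.inl k) (Sum.inr i) = 0 := by
  have e : ∀ (p q : Fin d), T x (Sum.inl p) (Sum.inl k) (Sum.inr q)
      = -∑ m, β x q m * T x (Sum.inl m) (Sum.inl p) (Sum.inl k) := by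
    intro p q
    have := c1 x p k q
    linarith
  have S : (∑ l, ∑ m, β x i l * (β x j m * T x (Sum.inl m) (Sum.inl l) (Sum.inl k)))
      + (∑ l, ∑ m, β x j l * (β x i m * T x (Sum.inl m) (Sum.inl l) (Sum.inl k))) = 0 := by
    rw [Finset.sum_comm (f := fun l m => β x j l * (β x i m * T x (Sum.inl m) (Sum.inl l) (Sum.inl k)))]
    rw [← Finset.sum_add_distrib]
    apply Finset.sum_eq_zero; intro a _
    rw [← Finset.sum_add_distrib]
    apply Finset.sum_eq_zero; intro b _
    rw [hT1 x (Sum.inl a) (Sum.inl b) (Sum.inl k)]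
    ring
  have t1 : ∑ l, β x i l * T x (Sum.inl l) (Sum.inl k) (Sum.inr j)
      = -∑ l, ∑ m, β x i l * (β x j m * T x (Sum.inl m) (Sum.inl l) (Sum.inl k)) := by
    rw [← Finset.sum_neg_distrib]
    apply Finset.sum_congr rfl; intro l _
    rw [e l j]
    simp [Finset.mul_sum]
  have t2 : ∑ l, β x j l * T x (Sum.inl l) (Sum.inl k) (Sum.inr i)
      = -∑ l, ∑ m, β x j l * (β x i m * T x (Sum.inl m) (Sum.inl l) (Sum.inl k)) := by
    rw [← Finset.sum_neg_distrib]
    apply Finset.sum_congr rfl; intro l _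
    rw [e l i]
    simp [Finset.mul_sum]
  rw [t1, t2]
  linarith

lemma flipEq (hT2 : ∀ (x : BSpace d) (I J K : DIdx d), T x I J K = -T x I K J)
    (x : BSpace d) (j : Fin d) (I J : DIdx d)
    (h : ∑ i, (rMix β x i I * pdb (fun y => rMix β y j J) i x
          - rMix β x i J * pdb (fun y => rMix β y j I) i x)
        = ∑ K, ∑ L, eta K L * rMix β x j K * T x L I J) :
    ∑ i, (rMix β x i J * pdb (fun y => rMix β y j I) i x
          - rMix β x i I * pdb (fun y => rMix β y j J) i x)
        = ∑ K, ∑ L, eta K L * rMix β x j K * T x L J I := by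
  have eL : ∑ i, (rMix β x i J * pdb (fun y => rMix β y j I) i x
          - rMix β x i I * pdb (fun y => rMix β y j J) i x)
      = -∑ i, (rMix β x i I * pdb (fun y => rMix β y j J) i x
          - rMix β x i J * pdb (fun y => rMix β y j I) i x) := by
    rw [← Finset.sum_neg_distrib]
    apply Finset.sum_congr rfl; intros; ring
  have eR : ∑ K, ∑ L, eta K L * rMix β x j K * T x L J I
      = -∑ K, ∑ L, eta K L * rMix β x j K * T x L I J := by
    rw [← Finset.sum_neg_distrib]
    apply Finset.sum_congr rfl; intro K _
    rw [← Finset.sum_neg_distrib]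
    apply Finset.sum_congr rfl; intro L _
    rw [hT2 x L J I]
    ring
  rw [eL, eR, h]

end Aux

/-- For the mixed anchor `(δ, β)` with totally antisymmetric twist
`T = (H, f, Q, R)`: (i) (ca1) holds iff `β` is an antisymmetric bivector; and (ii) for `β`
antisymmetric, (ca2) holds iff `f_{ij}{}^k + β^{kl} H_{lij} = 0`,
`∂_k β^{ij} − Q_k{}^{ji} + β^{jl} f_{lk}{}^i = 0` and
`β^{li} ∂_l β^{jk} − β^{lk} ∂_l β^{ji} − R^{jik} − β^{jl} Q_l{}^{ik} = 0`. -/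
theorem statement18 {d : ℕ} (β : BSpace d → Fin d → Fin d → ℝ)
    (hβd : ∀ i j : Fin d, Differentiable ℝ fun x => β x i j)
    (T : BSpace d → DIdx d → DIdx d → DIdx d → ℝ)
    (hTd : ∀ I J K : DIdx d, Differentiable ℝ fun x => T x I J K)
    (hT1 : ∀ (x : BSpace d) (I J K : DIdx d), T x I J K = -T x J I K)
    (hT2 : ∀ (x : BSpace d) (I J K : DIdx d), T x I J K = -T x I K J) :
    (ca1 (rMix β) ↔ ∀ (x : BSpace d) (i j : Fin d), β x i j + β x j i = 0)
    ∧ ((∀ (x : BSpace d) (i j : Fin d), β x i j = -β x j i) →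
        (ca2 (rMix β) T ↔
          ((∀ (x : BSpace d) (i j k : Fin d),
              T x (Sum.inl i) (Sum.inl j) (Sum.inr k)
                + ∑ l, β x k l * T x (Sum.inl l) (Sum.inl i) (Sum.inl j) = 0)
            ∧ (∀ (x : BSpace d) (k i j : Fin d),
              pdb (fun y => β y i j) k x
                - T x (Sum.inl k) (Sum.inr j) (Sum.inr i)
                + ∑ l, β x j l * T x (Sum.inl l) (Sum.inl k) (Sum.inr i) = 0)
            ∧ (∀ (x : BSpace d) (i j k : Fin d),
              (∑ l, (β x l i * pdb (fun y => β y j k) l x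
                  - β x l k * pdb (fun y => β y j i) l x))
                - T x (Sum.inr j) (Sum.inr i) (Sum.inr k)
                - ∑ l, β x j l * T x (Sum.inl l) (Sum.inr i) (Sum.inr k) = 0)))) := by
  constructor
  · -- part (i)
    have sum_eq : ∀ (x : BSpace d) (i j : Fin d),
        ∑ I, ∑ J, eta I J * rMix β x i I * rMix β x j J = β x j i + β x i j := by
      intro x i j
      simp [Fintype.sum_sum_type, eta, rMix, mul_ite, ite_mul,
        Finset.sum_ite_eq, Finset.sum_ite_eq']
    constructor
    · intro h x i j
      have := h x i j
      rw [sum_eq] at this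
      linarith
    · intro h x i j
      rw [sum_eq]
      linarith [h x i j]
  · intro _hanti
    constructor
    · -- forward
      intro h
      have c1 : ∀ (x : BSpace d) (i j k : Fin d),
          T x (Sum.inl i) (Sum.inl j) (Sum.inr k)
            + ∑ l, β x k l * T x (Sum.inl l) (Sum.inl i) (Sum.inl j) = 0 := by
        intro x i j k
        have h0 := h x k (Sum.inl i) (Sum.inl j)
        rw [rhsimp, lhs_ll] at h0
        have ht : T x (Sum.inr k) (Sum.inl i) (Sum.inl j)
            = T x (Sum.inl i) (Sum.inl j) (Sum.inr k) := by
          rw [hT1 x (Sum.inr k) (Sum.inl i) (Sum.inl j),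
            hT2 x (Sum.inl i) (Sum.inr k) (Sum.inl j)]
          ring
        rw [ht] at h0
        linarith
      refine ⟨c1, ?_, ?_⟩
      · intro x k i j
        have h0 := h x i (Sum.inl k) (Sum.inr j)
        rw [rhsimp, lhs_lr] at h0
        have hsw := swapsum β T hT1 c1 x k i j
        have ht : T x (Sum.inr i) (Sum.inl k) (Sum.inr j)
            = T x (Sum.inl k) (Sum.inr j) (Sum.inr i) := by
          rw [hT1 x (Sum.inr i) (Sum.inl k) (Sum.inr j),
            hT2 x (Sum.inl k) (Sum.inr i) (Sum.inr j)]
          ring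
        rw [ht] at h0
        linarith
      · intro x i j k
        have h0 := h x j (Sum.inr i) (Sum.inr k)
        rw [rhsimp, lhs_rr] at h0
        linarith
    · -- backward
      rintro ⟨c1, c2, c3⟩
      have Hll : ∀ (x : BSpace d) (j a b : Fin d),
          ∑ i, (rMix β x i (Sum.inl a) * pdb (fun y => rMix β y j (Sum.inl b)) i x
            - rMix β x i (Sum.inl b) * pdb (fun y => rMix β y j (Sum.inl a)) i x)
          = ∑ K, ∑ L, eta K L * rMix β x j K * T x L (Sum.inl a) (Sum.inl b) := by
        intro x j a b
        rw [rhsimp, lhs_ll]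
        have ht : T x (Sum.inr j) (Sum.inl a) (Sum.inl b)
            = T x (Sum.inl a) (Sum.inl b) (Sum.inr j) := by
          rw [hT1 x (Sum.inr j) (Sum.inl a) (Sum.inl b),
            hT2 x (Sum.inl a) (Sum.inr j) (Sum.inl b)]
          ring
        rw [ht]
        linarith [c1 x a b j]
      have Hlr : ∀ (x : BSpace d) (j a b : Fin d),
          ∑ i, (rMix β x i (Sum.inl a) * pdb (fun y => rMix β y j (Sum.inr b)) i x
            - rMix β x i (Sum.inr b) * pdb (fun y => rMix β y j (Sum.inl a)) i x)
          = ∑ K, ∑ L, eta K L * rMix β x j K * T x L (Sum.inl a) (Sum.inr b) := by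
        intro x j a b
        rw [rhsimp, lhs_lr]
        have hsw := swapsum β T hT1 c1 x a j b
        have ht : T x (Sum.inr j) (Sum.inl a) (Sum.inr b)
            = T x (Sum.inl a) (Sum.inr b) (Sum.inr j) := by
          rw [hT1 x (Sum.inr j) (Sum.inl a) (Sum.inr b),
            hT2 x (Sum.inl a) (Sum.inr j) (Sum.inr b)]
          ring
        rw [ht]
        linarith [c2 x a j b]
      have Hrr : ∀ (x : BSpace d) (j a b : Fin d),
          ∑ i, (rMix β x i (Sum.inr a) * pdb (fun y => rMix β y j (Sum.inr b)) i x
            - rMix β x i (Sum.inr b) * pdb (fun y => rMix β y j (Sum.inr a)) i x)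
          = ∑ K, ∑ L, eta K L * rMix β x j K * T x L (Sum.inr a) (Sum.inr b) := by
        intro x j a b
        rw [rhsimp, lhs_rr]
        linarith [c3 x a j b]
      intro x j I J
      rcases I with a | a <;> rcases J with b | b
      · exact Hll x j a b
      · exact Hlr x j a b
      · exact flipEq β T hT2 x j (Sum.inl b) (Sum.inr a) (Hlr x j b a)
      · exact Hrr x j a b
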